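/- arXiv:2108.10592 — 3 statements merged into one kernel-verified Lean document; each statement's English description precedes it below -/
import Mathlib

section
/- Let C be the category with four objects M, M₊, M₋, M_h and four non-identity morphisms i₊ : M₊ → M, i₋ : M₋ → M, j₊ : M₊ → M_h, j₋ : M₋ → M_h (and no nontrivial compositions). Let BZ be the one-object groupoid with morphism group ℤ. Define the functor L : C → BZ sending every object to the unique object, sending i₋ to 1 and i₊, j₊, j₋ to 0. Then L exhibits BZ as the localization of C at all of its morphisms: L sends all morphisms to isomorphisms, and for every category D and functor F : C → D sending all morphisms to isomorphisms there exists a functor F' : BZ → D and a natural isomorphism F' ∘ L ≅ F. -/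
/-!
STATEMENT 0: Let `C` be the free category on the zig-zag quiver with four objects
`M, M₊, M₋, M_h` and four arrows `i₊ : M₊ → M`, `i₋ : M₋ → M`, `j₊ : M₊ → M_h`,
`j₋ : M₋ → M_h`.  Let `BZ` be the one-object groupoid with morphism group `ℤ`
(`SingleObj (Multiplicative ℤ)`).  Let `L : C ⥤ BZ` send every object to the unique object,
`i₋` to `1 ∈ ℤ` and `i₊, j₊, j₋` to `0 ∈ ℤ`.  Then `L` exhibits `BZ` as the localization of
`C` at all of its morphisms: `L` sends all morphisms to isomorphisms, and for every category
`D` and every functor `F : C ⥤ D` sending all morphisms to isomorphisms there exists a functor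
`F' : BZ ⥤ D` and a natural isomorphism `F' ∘ L ≅ F`.
-/

open CategoryTheory

/-- Objects of the zig-zag quiver. -/
inductive ZZObj : Type
  | M | Mp | Mm | Mh

/-- Arrows of the zig-zag quiver: `i₊ : M₊ → M`, `i₋ : M₋ → M`, `j₊ : M₊ → M_h`,
`j₋ : M₋ → M_h`. -/
inductive ZZArr : ZZObj → ZZObj → Type
  | ip : ZZArr .Mp .M
  | im : ZZArr .Mm .M
  | jp : ZZArr .Mp .Mh
  | jm : ZZArr .Mm .Mh

instance : Quiver ZZObj := ⟨ZZArr⟩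

/-- The zig-zag category `C`: the free category (category of paths) on the zig-zag quiver. -/
abbrev ZZCat : Type := Paths ZZObj

/-- The value of the localization functor on generating arrows: `i₋ ↦ 1`, the rest `↦ 0`. -/
def ZZArr.toInt : ∀ {a b : ZZObj}, ZZArr a b → ℤ
  | _, _, .im => 1
  | _, _, _ => 0

/-- The localization functor `L : C ⥤ BZ`. -/
def Lzz : ZZCat ⥤ SingleObj (Multiplicative ℤ) :=
  Paths.lift
    { obj := fun _ => SingleObj.star (Multiplicative ℤ)
      map := fun f => Multiplicative.ofAdd f.toInt }

namespace ZZaux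

universe v u

variable {D : Type u} [Category.{v} D] (F : ZZCat ⥤ D)
  (hF : ∀ {a b : ZZCat} (f : a ⟶ b), IsIso (F.map f))

/-- A generating arrow as a morphism of the path category. -/
def pm {a b : ZZObj} (e : ZZArr a b) : (Paths.of ZZObj).obj a ⟶ (Paths.of ZZObj).obj b :=
  (Paths.of ZZObj).map e

/-- The image under `F` of a generating arrow, as an isomorphism. -/
noncomputable def fm {a b : ZZObj} (e : ZZArr a b) :
    F.obj ((Paths.of ZZObj).obj a) ≅ F.obj ((Paths.of ZZObj).obj b) :=
  haveI := hF (pm e)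
  asIso (F.map (pm e))

@[simp] lemma fm_hom {a b : ZZObj} (e : ZZArr a b) :
    (fm F hF e).hom = F.map (pm e) := rfl

/-- Components of the comparison natural isomorphism. -/
noncomputable def α : ∀ x : ZZObj, F.obj ((Paths.of ZZObj).obj ZZObj.M) ≅ F.obj ((Paths.of ZZObj).obj x)
  | .M => Iso.refl _
  | .Mp => (fm F hF .ip).symm
  | .Mh => (fm F hF .ip).symm ≪≫ fm F hF .jp
  | .Mm => (fm F hF .ip).symm ≪≫ fm F hF .jp ≪≫ (fm F hF .jm).symm

/-- The zig-zag loop automorphism, image of the generator `1 ∈ ℤ`. -/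
noncomputable def g : Aut (F.obj ((Paths.of ZZObj).obj ZZObj.M)) :=
  α F hF .Mm ≪≫ fm F hF .im

/-- The induced functor `BZ ⥤ D`. -/
noncomputable def F' : SingleObj (Multiplicative ℤ) ⥤ D :=
  SingleObj.functor ((Aut.toEnd _).comp (zpowersHom _ (g F hF)))

lemma F'_map (n : Multiplicative ℤ) :
    (F' F hF).map (X := SingleObj.star _) (Y := SingleObj.star _) n
      = ((g F hF) ^ (Multiplicative.toAdd n)).hom := rfl

lemma Lzz_map_toPath {a b : ZZObj} (e : ZZArr a b) :
    Lzz.map (pm e) = Multiplicative.ofAdd e.toInt := by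
  exact Paths.lift_toPath (V := ZZObj) _ (show a ⟶ b from e)

lemma arrow_naturality {a b : ZZObj} (e : ZZArr a b) :
    (F' F hF).map (Lzz.map (pm e)) ≫ (α F hF b).hom
      = (α F hF a).hom ≫ F.map (pm e) := by
  rw [Lzz_map_toPath, F'_map]
  cases e with
  | ip =>
    show ((g F hF) ^ (0:ℤ)).hom ≫ (α F hF .M).hom
        = (α F hF .Mp).hom ≫ (fm F hF .ip).hom
    rw [zpow_zero]
    show (Iso.refl _).hom ≫ (Iso.refl _).hom
        = ((fm F hF .ip).symm).hom ≫ (fm F hF .ip).hom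
    simp only [Iso.trans_hom, Iso.symm_hom, Iso.refl_hom, Category.id_comp, Category.comp_id, Category.assoc, Iso.inv_hom_id, Iso.inv_hom_id_assoc, Iso.hom_inv_id, Iso.hom_inv_id_assoc]
  | jp =>
    show ((g F hF) ^ (0:ℤ)).hom ≫ (α F hF .Mh).hom
        = (α F hF .Mp).hom ≫ (fm F hF .jp).hom
    rw [zpow_zero]
    show (Iso.refl _).hom ≫ ((fm F hF .ip).symm ≪≫ fm F hF .jp).hom
        = ((fm F hF .ip).symm).hom ≫ (fm F hF .jp).hom
    simp only [Iso.trans_hom, Iso.symm_hom, Iso.refl_hom, Category.id_comp, Category.comp_id, Category.assoc, Iso.inv_hom_id, Iso.inv_hom_id_assoc, Iso.hom_inv_id, Iso.hom_inv_id_assoc]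
  | jm =>
    show ((g F hF) ^ (0:ℤ)).hom ≫ (α F hF .Mh).hom
        = (α F hF .Mm).hom ≫ (fm F hF .jm).hom
    rw [zpow_zero]
    show (Iso.refl _).hom ≫ ((fm F hF .ip).symm ≪≫ fm F hF .jp).hom
        = ((fm F hF .ip).symm ≪≫ fm F hF .jp ≪≫ (fm F hF .jm).symm).hom
            ≫ (fm F hF .jm).hom
    simp only [Iso.trans_hom, Iso.symm_hom, Iso.refl_hom, Category.id_comp, Category.comp_id, Category.assoc, Iso.inv_hom_id, Iso.inv_hom_id_assoc, Iso.hom_inv_id, Iso.hom_inv_id_assoc]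
  | im =>
    show ((g F hF) ^ (1:ℤ)).hom ≫ (α F hF .M).hom
        = (α F hF .Mm).hom ≫ (fm F hF .im).hom
    rw [zpow_one]
    show ((α F hF .Mm) ≪≫ fm F hF .im).hom ≫ (Iso.refl _).hom
        = (α F hF .Mm).hom ≫ (fm F hF .im).hom
    simp only [Iso.trans_hom, Iso.symm_hom, Iso.refl_hom, Category.id_comp, Category.comp_id, Category.assoc, Iso.inv_hom_id, Iso.inv_hom_id_assoc, Iso.hom_inv_id, Iso.hom_inv_id_assoc]

lemma naturality {a b : ZZCat} (f : a ⟶ b) :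
    (F' F hF).map (Lzz.map f) ≫ (α F hF b).hom = (α F hF a).hom ≫ F.map f := by
  induction f using Paths.induction_fixed_source with
  | id =>
    exact (Category.id_comp _).trans ((Category.comp_id _).symm.trans (congrArg _ (F.map_id a).symm))
  | @comp x y p e ih =>
    show (F' F hF).map (Lzz.map (p ≫ pm e)) ≫ _ = _ ≫ F.map (p ≫ pm e)
    rw [Functor.map_comp, Functor.map_comp, Functor.map_comp]
    exact (Category.assoc _ _ _).trans ((congrArg (_ ≫ ·) (arrow_naturality F hF e)).trans
      ((Category.assoc _ _ _).symm.trans ((congrArg (· ≫ F.map (pm e)) ih).trans (Category.assoc _ _ _))))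

end ZZaux

theorem Lzz_is_localization_at_all_morphisms :
    (∀ {a b : ZZCat} (f : a ⟶ b), IsIso (Lzz.map f)) ∧
    (∀ (D : Type u) [Category.{v} D] (F : ZZCat ⥤ D),
      (∀ {a b : ZZCat} (f : a ⟶ b), IsIso (F.map f)) →
      ∃ F' : SingleObj (Multiplicative ℤ) ⥤ D, Nonempty (Lzz ⋙ F' ≅ F)) := by
  constructor
  · intro a b f
    infer_instance
  · intro D _ F hF
    refine ⟨ZZaux.F' F hF, ⟨NatIso.ofComponents (fun x => ZZaux.α F hF x) ?_⟩⟩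
    intro a b f
    exact ZZaux.naturality F hF f
end

section
/- With C, BZ, and L : C → BZ as above, the precomposition functor L* : Fun(BZ, D) → Fun(C, D), G ↦ G ∘ L, is fully faithful for every category D. -/
/-!
STATEMENT 1: With `C` the zig-zag category (free category on `M ← M₊ → M_h ← M₋ → M`),
`BZ = SingleObj (Multiplicative ℤ)` and `L : C ⥤ BZ` the localization functor (sending `i₋` to
`1` and `i₊, j₊, j₋` to `0`), the precomposition functor
`L* : Fun(BZ, D) → Fun(C, D), G ↦ G ∘ L` is fully faithful for every category `D`.
-/

open CategoryTheory

namespace LzzFFAux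

abbrev st := SingleObj.star (Multiplicative ℤ)

def e (n : ℤ) : st ⟶ st := Multiplicative.ofAdd n

lemma e_comp (x y : ℤ) : e x ≫ e y = e (y + x) := by
  show Multiplicative.ofAdd y * Multiplicative.ofAdd x = Multiplicative.ofAdd (y + x)
  rw [← ofAdd_add]

lemma e_zero : e 0 = 𝟙 st := rfl

lemma e_eq (f : st ⟶ st) : f = e (Multiplicative.toAdd f) := rfl

variable {D : Type u} [Category.{v} D]

lemma map_one' (H : SingleObj (Multiplicative ℤ) ⥤ D) :
    H.map (1 : Multiplicative ℤ) = 𝟙 (H.obj st) := by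
  with_unfolding_all exact H.map_id _

lemma cancel_id {A B : D} (x y : A ⟶ B) (h : 𝟙 A ≫ x = y ≫ 𝟙 B) : x = y := by
  rwa [Category.id_comp, Category.comp_id] at h

lemma comm_all (G G' : SingleObj (Multiplicative ℤ) ⥤ D)
    (c : G.obj st ⟶ G'.obj st)
    (h1 : c ≫ G'.map (e 1) = G.map (e 1) ≫ c) (f : st ⟶ st) :
    c ≫ G'.map f = G.map f ≫ c := by
  have mapinv : ∀ (H : SingleObj (Multiplicative ℤ) ⥤ D),
      H.map (e 1) ≫ H.map (e (-1)) = 𝟙 _ ∧ H.map (e (-1)) ≫ H.map (e 1) = 𝟙 _ := by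
    intro H
    constructor <;> rw [← H.map_comp, e_comp] <;> norm_num <;> rw [e_zero, H.map_id]
  have hinv : c ≫ G'.map (e (-1)) = G.map (e (-1)) ≫ c := by
    have h2 := (mapinv G).2
    have h3 := (mapinv G').1
    calc c ≫ G'.map (e (-1))
        = (G.map (e (-1)) ≫ G.map (e 1)) ≫ c ≫ G'.map (e (-1)) := by
          rw [h2, Category.id_comp]
      _ = G.map (e (-1)) ≫ (G.map (e 1) ≫ c) ≫ G'.map (e (-1)) := by
          simp only [Category.assoc]
      _ = G.map (e (-1)) ≫ (c ≫ G'.map (e 1)) ≫ G'.map (e (-1)) := by rw [h1]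
      _ = G.map (e (-1)) ≫ c ≫ (G'.map (e 1) ≫ G'.map (e (-1))) := by
          simp only [Category.assoc]
      _ = G.map (e (-1)) ≫ c := by rw [h3, Category.comp_id]
  have main : ∀ n : ℤ, c ≫ G'.map (e n) = G.map (e n) ≫ c := by
    intro n
    induction n using Int.induction_on with
    | zero => rw [e_zero, G.map_id, G'.map_id, Category.id_comp, Category.comp_id]
    | succ k ih =>
        have hd : e ((k : ℤ) + 1) = e 1 ≫ e k := (e_comp 1 k).symm
        rw [hd, G.map_comp, G'.map_comp, ← Category.assoc, h1, Category.assoc, ih,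
          ← Category.assoc]
    | pred k ih =>
        have hd : e (-(k : ℤ) - 1) = e (-1) ≫ e (-k) := by
          rw [e_comp]; ring_nf
        rw [hd, G.map_comp, G'.map_comp, ← Category.assoc, hinv, Category.assoc, ih,
          ← Category.assoc]
  rw [e_eq f]
  exact main _

end LzzFFAux

open LzzFFAux in
theorem precomposition_with_Lzz_fully_faithful
    (D : Type u) [Category.{v} D] :
    ((Functor.whiskeringLeft ZZCat (SingleObj (Multiplicative ℤ)) D).obj Lzz).Full ∧
    ((Functor.whiskeringLeft ZZCat (SingleObj (Multiplicative ℤ)) D).obj Lzz).Faithful := by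
  constructor
  · constructor
    intro G G' α
    have hip := α.naturality (Quiver.Hom.toPath ZZArr.ip)
    have him := α.naturality (Quiver.Hom.toPath ZZArr.im)
    have hjp := α.naturality (Quiver.Hom.toPath ZZArr.jp)
    have hjm := α.naturality (Quiver.Hom.toPath ZZArr.jm)
    simp [Lzz, ZZArr.toInt, map_one'] at hip him hjp hjm
    have hip2 : (α.app (ZZObj.M : ZZCat) : G.obj st ⟶ G'.obj st) =
        α.app (ZZObj.Mp : ZZCat) := cancel_id _ _
          ((congrArg (· ≫ _) (map_one' G).symm).trans (hip.trans (congrArg (_ ≫ ·) (map_one' G'))))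
    have hjp2 : (α.app (ZZObj.Mh : ZZCat) : G.obj st ⟶ G'.obj st) =
        α.app (ZZObj.Mp : ZZCat) := cancel_id _ _
          ((congrArg (· ≫ _) (map_one' G).symm).trans (hjp.trans (congrArg (_ ≫ ·) (map_one' G'))))
    have hjm2 : (α.app (ZZObj.Mh : ZZCat) : G.obj st ⟶ G'.obj st) =
        α.app (ZZObj.Mm : ZZCat) := cancel_id _ _
          ((congrArg (· ≫ _) (map_one' G).symm).trans (hjm.trans (congrArg (_ ≫ ·) (map_one' G'))))
    have him2 : G.map (e 1) ≫ (α.app (ZZObj.M : ZZCat) : G.obj st ⟶ G'.obj st) =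
        (α.app (ZZObj.Mm : ZZCat) : G.obj st ⟶ G'.obj st) ≫ G'.map (e 1) := him
    have hmm : (α.app (ZZObj.Mm : ZZCat) : G.obj st ⟶ G'.obj st) =
        α.app (ZZObj.M : ZZCat) := by
      rw [← hjm2, hjp2, ← hip2]
    rw [hmm] at him2
    have h1 : (α.app (ZZObj.M : ZZCat) : G.obj st ⟶ G'.obj st) ≫ G'.map (e 1) =
        G.map (e 1) ≫ (α.app (ZZObj.M : ZZCat) : G.obj st ⟶ G'.obj st) := him2.symm
    refine ⟨{ app := fun _ => (α.app (ZZObj.M : ZZCat) : G.obj st ⟶ G'.obj st)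
              naturality := fun _ _ f => (comm_all G G' _ h1 f).symm }, ?_⟩
    have key : ∀ x : ZZObj, (α.app (ZZObj.M : ZZCat) : G.obj st ⟶ G'.obj st) =
        α.app (x : ZZCat) := by
      intro x
      cases x with
      | M => rfl
      | Mp => exact hip2
      | Mm => exact hmm.symm
      | Mh => exact hip2.trans hjp2.symm
    ext X
    exact key X
  · constructor
    intro G G' β β' h
    ext ⟨⟩
    exact congrArg (fun (γ : Lzz ⋙ G ⟶ Lzz ⋙ G') => γ.app (ZZObj.M : ZZCat)) h
end

section
/- Let D be any category and F : C → D a functor from the zig-zag category C (as above) that sends every morphism to an isomorphism. Define F'(1) := F(i₋) ∘ F(j₋)⁻¹ ∘ F(j₊) ∘ F(i₊)⁻¹ : F(M) → F(M). Then F'(1) is an automorphism of F(M), hence extends to a functor F' : BZ → D with F'(*) = F(M) and F'(n) = F'(1)ⁿ, and there is a natural isomorphism η : F → F' ∘ L with components η_M = id, η_{M₊} = F(i₊), η_{M_h} = F(i₊) ∘ F(j₊)⁻¹, η_{M₋} = F(i₊) ∘ F(j₊)⁻¹ ∘ F(j₋). -/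
/-!
STATEMENT 2: Let `D` be a category and `F : C ⥤ D` a functor from the zig-zag category `C`
sending every morphism to an isomorphism.  Define
`F'(1) := F(i₋) ∘ F(j₋)⁻¹ ∘ F(j₊) ∘ F(i₊)⁻¹ : F(M) → F(M)`.  Then `F'(1)` is an automorphism
of `F(M)`, hence extends to a functor `F' : BZ ⥤ D` with `F'(*) = F(M)` and `F'(n) = F'(1)ⁿ`,
and there is a natural isomorphism `η : F ≅ F' ∘ L` with components `η_M = id`,
`η_{M₊} = F(i₊)`, `η_{M_h} = F(i₊) ∘ F(j₊)⁻¹`, `η_{M₋} = F(i₊) ∘ F(j₊)⁻¹ ∘ F(j₋)`.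
-/

open CategoryTheory

/-- The objects of the zig-zag category. -/
def objM : ZZCat := (Paths.of ZZObj).obj ZZObj.M
def objMp : ZZCat := (Paths.of ZZObj).obj ZZObj.Mp
def objMm : ZZCat := (Paths.of ZZObj).obj ZZObj.Mm
def objMh : ZZCat := (Paths.of ZZObj).obj ZZObj.Mh

/-- The generating morphisms of the zig-zag category. -/
def ipP : objMp ⟶ objM := (Paths.of ZZObj).map ZZArr.ip
def imP : objMm ⟶ objM := (Paths.of ZZObj).map ZZArr.im
def jpP : objMp ⟶ objMh := (Paths.of ZZObj).map ZZArr.jp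
def jmP : objMm ⟶ objMh := (Paths.of ZZObj).map ZZArr.jm

/-- `n`-th power in the monoid of endomorphisms of an object. -/
def endPow {D : Type u} [Category.{v} D] {X : D} (f : End X) (n : ℕ) : End X := f ^ n

theorem functor_inverting_all_extends_to_BZ
    (D : Type u) [Category.{v} D] (F : ZZCat ⥤ D)
    (hF : ∀ {a b : ZZCat} (f : a ⟶ b), IsIso (F.map f)) :
    ∃ (F' : SingleObj (Multiplicative ℤ) ⥤ D)
      (h : F'.obj (SingleObj.star (Multiplicative ℤ)) = F.obj objM),
      -- F'(1) is the composite F(i₋) ∘ F(j₋)⁻¹ ∘ F(j₊) ∘ F(i₊)⁻¹ : F(M) → F(M)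
      (F'.map (Multiplicative.ofAdd (1 : ℤ)) =
        eqToHom h ≫ (haveI := hF ipP; inv (F.map ipP)) ≫ F.map jpP ≫
          (haveI := hF jmP; inv (F.map jmP)) ≫ F.map imP ≫ eqToHom h.symm) ∧
      -- F'(n) = F'(1)ⁿ for all n ∈ ℤ (stated for n ∈ ℕ and its negative, using the
      -- monoid of endomorphisms of F'(*))
      (∀ n : ℕ, F'.map (X := SingleObj.star (Multiplicative ℤ)) (Y := SingleObj.star (Multiplicative ℤ)) (Multiplicative.ofAdd (n : ℤ)) =
        endPow (F'.map (X := SingleObj.star (Multiplicative ℤ)) (Y := SingleObj.star (Multiplicative ℤ)) (Multiplicative.ofAdd (1 : ℤ))) n) ∧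
      (∀ n : ℕ, F'.map (X := SingleObj.star (Multiplicative ℤ)) (Y := SingleObj.star (Multiplicative ℤ)) (Multiplicative.ofAdd (-(n : ℤ))) =
        endPow (inv (F'.map (X := SingleObj.star (Multiplicative ℤ)) (Y := SingleObj.star (Multiplicative ℤ)) (Multiplicative.ofAdd (1 : ℤ)))) n) ∧
      -- the natural isomorphism η : F ≅ F' ∘ L, with the stated components
      ∃ η : F ≅ Lzz ⋙ F',
        (η.hom.app objM = eqToHom h.symm) ∧
        (η.hom.app objMp = F.map ipP ≫ eqToHom h.symm) ∧
        (η.hom.app objMh =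
          (haveI := hF jpP; inv (F.map jpP)) ≫ F.map ipP ≫ eqToHom h.symm) ∧
        (η.hom.app objMm =
          F.map jmP ≫ (haveI := hF jpP; inv (F.map jpP)) ≫ F.map ipP ≫ eqToHom h.symm) := by
  haveI : ∀ {a b : ZZCat} (f : a ⟶ b), IsIso (F.map f) := hF
  -- the automorphism F'(1)
  let g : F.obj objM ⟶ F.obj objM :=
    inv (F.map ipP) ≫ F.map jpP ≫ inv (F.map jmP) ≫ F.map imP
  haveI : IsIso g := by unfold g; infer_instance
  let u : Aut (F.obj objM) := asIso g
  let F' : SingleObj (Multiplicative ℤ) ⥤ D :=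
    SingleObj.functor ((Aut.toEnd (F.obj objM)).comp (zpowersHom (Aut (F.obj objM)) u))
  have hmap : ∀ n : ℤ, F'.map (X := SingleObj.star (Multiplicative ℤ))
      (Y := SingleObj.star (Multiplicative ℤ)) (Multiplicative.ofAdd n)
        = Aut.toEnd (F.obj objM) (u ^ n) := fun n => rfl
  have hone : F'.map (X := SingleObj.star (Multiplicative ℤ))
      (Y := SingleObj.star (Multiplicative ℤ)) (Multiplicative.ofAdd (1 : ℤ)) = g := by
    rw [hmap, zpow_one]
    rfl
  refine ⟨F', rfl, ?_, ?_, ?_, ?_⟩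
  · simp [hone, g]
    erw [Category.id_comp, Category.comp_id]
    rfl
  · intro n
    rw [hmap, endPow, hone]
    rw [zpow_natCast, map_pow]
    rfl
  · intro n
    have hinv : inv (F'.map (X := SingleObj.star (Multiplicative ℤ))
        (Y := SingleObj.star (Multiplicative ℤ)) (Multiplicative.ofAdd (1 : ℤ)))
          = Aut.toEnd (F.obj objM) u⁻¹ := by
      apply IsIso.inv_eq_of_hom_inv_id
      rw [hone]
      show g ≫ (u⁻¹ : Aut (F.obj objM)).hom = 𝟙 _
      exact (asIso g).hom_inv_id
    rw [hmap, endPow, zpow_neg, zpow_natCast, ← inv_pow, map_pow, ← hinv]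
    rfl
  · -- the natural isomorphism
    have hid : F'.map (X := SingleObj.star (Multiplicative ℤ))
        (Y := SingleObj.star (Multiplicative ℤ)) (1 : Multiplicative ℤ) = 𝟙 (F.obj objM) :=
      F'.map_id _
    haveI : IsIso (F.map ipP) := hF ipP
    haveI : IsIso (F.map jpP) := hF jpP
    haveI : IsIso (F.map jmP) := hF jmP
    haveI : IsIso (F.map imP) := hF imP
    let app : ∀ x : ZZObj, F.obj ((Paths.of ZZObj).obj x) ⟶ (Lzz ⋙ F').obj ((Paths.of ZZObj).obj x)
      | .M => 𝟙 _
      | .Mp => F.map ipP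
      | .Mh => (inv (F.map jpP) : F.obj objMh ⟶ F.obj objMp) ≫ F.map ipP
      | .Mm => F.map jmP ≫ inv (F.map jpP) ≫ F.map ipP
    haveI : ∀ x : ZZObj, IsIso (app x) := by
      intro x; cases x
      · exact (inferInstance : IsIso (𝟙 (F.obj objM)))
      · exact (inferInstance : IsIso (F.map ipP))
      · exact (inferInstance : IsIso (F.map jmP ≫ (inv (F.map jpP) : F.obj objMh ⟶ F.obj objMp) ≫ F.map ipP))
      · exact (inferInstance : IsIso ((inv (F.map jpP) : F.obj objMh ⟶ F.obj objMp) ≫ F.map ipP))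
    have natgen : ∀ {a b : ZZObj} (e : ZZArr a b),
        F.map ((Paths.of ZZObj).map e) ≫ app b = app a ≫ (Lzz ⋙ F').map ((Paths.of ZZObj).map e) := by
      intro a b e
      have hL : ∀ {a b : ZZObj} (e : ZZArr a b),
          (Lzz ⋙ F').map ((Paths.of ZZObj).map e)
            = F'.map (X := SingleObj.star (Multiplicative ℤ))
                (Y := SingleObj.star (Multiplicative ℤ)) (Multiplicative.ofAdd e.toInt) := by
        intro a b e
        show F'.map (Lzz.map (Quiver.Hom.toPath e)) = _
        rw [Lzz, Paths.lift_toPath]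
      cases e
      case ip =>
        rw [hL, show (Multiplicative.ofAdd (ZZArr.toInt .ip)) = (1 : Multiplicative ℤ) from rfl,
          hid]
        rfl
      case jp =>
        rw [hL, show (Multiplicative.ofAdd (ZZArr.toInt .jp)) = (1 : Multiplicative ℤ) from rfl,
          hid]
        show F.map jpP ≫ (inv (F.map jpP) ≫ F.map ipP) = F.map ipP ≫ 𝟙 (F.obj objM)
        simp
      case jm =>
        rw [hL, show (Multiplicative.ofAdd (ZZArr.toInt .jm)) = (1 : Multiplicative ℤ) from rfl,
          hid]
        show F.map jmP ≫ (inv (F.map jpP) ≫ F.map ipP)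
            = (F.map jmP ≫ inv (F.map jpP) ≫ F.map ipP) ≫ 𝟙 (F.obj objM)
        simp
      case im =>
        rw [hL, show (Multiplicative.ofAdd (ZZArr.toInt .im))
            = (Multiplicative.ofAdd (1 : ℤ)) from rfl, hone]
        show F.map imP ≫ 𝟙 (F.obj objM)
            = (F.map jmP ≫ inv (F.map jpP) ≫ F.map ipP) ≫ g
        simp [g]
    have nat : ∀ {a b : ZZObj} (f : Quiver.Path a b),
        F.map (show (Paths.of ZZObj).obj a ⟶ (Paths.of ZZObj).obj b from f) ≫ app b
          = app a ≫ (Lzz ⋙ F').map (show (Paths.of ZZObj).obj a ⟶ (Paths.of ZZObj).obj b from f) := by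
      intro a b f
      induction f with
      | nil =>
        show F.map (𝟙 ((Paths.of ZZObj).obj a)) ≫ app a = app a ≫ (Lzz ⋙ F').map (𝟙 ((Paths.of ZZObj).obj a))
        simp
      | @cons b' c p e ih =>
        dsimp only at ih ⊢
        have h1 : (show (Paths.of ZZObj).obj a ⟶ (Paths.of ZZObj).obj c from Quiver.Path.cons p e)
            = (show (Paths.of ZZObj).obj a ⟶ (Paths.of ZZObj).obj b' from p) ≫ (Paths.of ZZObj).map e := rfl
        dsimp only at h1
        erw [h1]
        erw [Functor.map_comp, Functor.map_comp, Category.assoc, natgen,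
          ← Category.assoc, ih, Category.assoc]
    refine ⟨NatIso.ofComponents (fun x => @asIso _ _ _ _ (app x) (this x)) (fun {a b} f => nat f), ?_, ?_, ?_, ?_⟩
    · rfl
    · exact (Category.comp_id (F.map ipP)).symm
    · exact congrArg (fun k => (inv (F.map jpP) : F.obj objMh ⟶ F.obj objMp) ≫ k)
        (Category.comp_id (F.map ipP)).symm
    · exact congrArg (fun k => F.map jmP ≫ (inv (F.map jpP) : F.obj objMh ⟶ F.obj objMp) ≫ k)
        (Category.comp_id (F.map ipP)).symm
end
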